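/- Let A = a + 2λ², D = √(4λ²k² - A²) with 4λ²k² - A² > 0 (a, k, λ real, λk ≠ 0), B = k² - a + 2λ², and c₁, c₂ complex constants not both zero. Then μ(x,t) = (1/(2λk)) (Ai + D (c₁ e^{D(x+Bt)/2} - c₂ e^{-D(x+Bt)/2}) / (c₁ e^{D(x+Bt)/2} + c₂ e^{-D(x+Bt)/2})) satisfies μ_x + λk μ² - i A μ - λk = 0 and μ_t = B μ_x, wherever the denominator is nonzero. -/

import Mathlib

open Complex

noncomputable def pdx (g : ℝ → ℝ → ℂ) (x t : ℝ) : ℂ := deriv (fun y => g y t) x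

noncomputable def pdt (g : ℝ → ℝ → ℂ) (x t : ℝ) : ℂ := deriv (fun s => g x s) t

lemma key_stmt13 (Dc Ac L c1 c2 : ℂ) (w : ℝ → ℝ) (cc : ℝ) (s : ℝ)
    (hw : HasDerivAt w cc s)
    (hden : c1 * Complex.exp ((w s : ℂ)) + c2 * Complex.exp (-((w s : ℂ))) ≠ 0) :
    HasDerivAt (fun y : ℝ => L * (Ac * I + Dc *
        (c1 * Complex.exp ((w y : ℂ)) - c2 * Complex.exp (-((w y : ℂ)))) /
        (c1 * Complex.exp ((w y : ℂ)) + c2 * Complex.exp (-((w y : ℂ))))))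
      (L * Dc * (4 * cc * c1 * c2) /
        (c1 * Complex.exp ((w s : ℂ)) + c2 * Complex.exp (-((w s : ℂ))))^2) s := by
  set E := Complex.exp ((w s : ℂ)) with hE
  set F := Complex.exp (-((w s : ℂ))) with hF
  have hw' : HasDerivAt (fun y => ((w y : ℝ) : ℂ)) (cc : ℂ) s := hw.ofReal_comp
  have h1 := hw'.cexp
  have h2 := (hw'.neg).cexp
  have hnum := (h1.const_mul c1).sub (h2.const_mul c2)
  have hden' := (h1.const_mul c1).add (h2.const_mul c2)
  have hdiv := hnum.div hden' hden
  have H := ((hdiv.const_mul Dc).const_add (Ac * I)).const_mul L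
  have hEF : E * F = 1 := by rw [hE, hF, ← Complex.exp_add]; simp
  have hBIG : (c1 * (E * (cc:ℂ)) - c2 * (F * (-(cc:ℂ)))) * (c1 * E + c2 * F)
      - (c1 * E - c2 * F) * (c1 * (E * (cc:ℂ)) + c2 * (F * (-(cc:ℂ))))
      = 4 * (cc:ℂ) * c1 * c2 := by
    linear_combination (4 * (cc:ℂ) * c1 * c2) * hEF
  simp only [Pi.div_apply, Pi.sub_apply, Pi.add_apply, Pi.neg_apply, ← hE, ← hF] at H
  rw [hBIG] at H
  have H2 := H.congr_of_eventuallyEq (f₁ := fun y : ℝ => L * (Ac * I + Dc *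
        (c1 * Complex.exp ((w y : ℂ)) - c2 * Complex.exp (-((w y : ℂ)))) /
        (c1 * Complex.exp ((w y : ℂ)) + c2 * Complex.exp (-((w y : ℂ))))))
    (Filter.Eventually.of_forall fun y => by ring)
  have hval : L * (Dc * (4 * (cc:ℂ) * c1 * c2 / (c1 * E + c2 * F) ^ 2))
      = L * Dc * (4 * cc * c1 * c2) / (c1 * E + c2 * F) ^ 2 := by ring
  rw [← hval]
  exact H2

/-- With `A = a + 2λ²`, `B = k² - a + 2λ²`, `D = √(4λ²k² - A²) > 0` (`a, k, λ` real,
`λk ≠ 0`) and `c₁, c₂` complex constants not both zero, the function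
`μ(x,t) = (1/(2λk)) (Ai + D (c₁ e^{D(x+Bt)/2} - c₂ e^{-D(x+Bt)/2})/(c₁ e^{D(x+Bt)/2} + c₂ e^{-D(x+Bt)/2}))`
satisfies `μ_x + λk μ² - iAμ - λk = 0` and `μ_t = B μ_x` wherever the denominator
is nonzero. -/
theorem stmt13 (a k lam A B D : ℝ) (hlk : lam * k ≠ 0)
    (hA : A = a + 2 * lam^2) (hpos : 4 * lam^2 * k^2 - A^2 > 0)
    (hD : D = Real.sqrt (4 * lam^2 * k^2 - A^2))
    (hB : B = k^2 - a + 2 * lam^2)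
    (c1 c2 : ℂ) (hc : ¬(c1 = 0 ∧ c2 = 0))
    (μ : ℝ → ℝ → ℂ)
    (hμ : ∀ x t : ℝ, μ x t = (1 / (2 * (lam : ℂ) * (k : ℂ))) *
      ((A : ℂ) * I + (D : ℂ) *
        (c1 * Complex.exp (((D * (x + B * t) / 2 : ℝ) : ℂ))
          - c2 * Complex.exp (-((D * (x + B * t) / 2 : ℝ) : ℂ))) /
        (c1 * Complex.exp (((D * (x + B * t) / 2 : ℝ) : ℂ))
          + c2 * Complex.exp (-((D * (x + B * t) / 2 : ℝ) : ℂ))))) :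
    ∀ x t : ℝ,
      (c1 * Complex.exp (((D * (x + B * t) / 2 : ℝ) : ℂ))
        + c2 * Complex.exp (-((D * (x + B * t) / 2 : ℝ) : ℂ)) ≠ 0) →
      (pdx μ x t + (lam : ℂ) * (k : ℂ) * (μ x t)^2 - I * (A : ℂ) * μ x t
          - (lam : ℂ) * (k : ℂ) = 0) ∧
      pdt μ x t = (B : ℂ) * pdx μ x t := by
  intro x t hden
  have hlam : (lam : ℂ) ≠ 0 := by
    simpa using (Complex.ofReal_ne_zero.2 (fun h => hlk (by simp [h])))
  have hk : (k : ℂ) ≠ 0 := by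
    simpa using (Complex.ofReal_ne_zero.2 (fun h => hlk (by simp [h])))
  have hD2r : D^2 = 4*lam^2*k^2 - A^2 := by rw [hD]; exact Real.sq_sqrt hpos.le
  have hD2 : ((D:ℂ))^2 = 4*(lam:ℂ)^2*(k:ℂ)^2 - (A:ℂ)^2 := by exact_mod_cast hD2r
  -- derivative in x
  have hwx : HasDerivAt (fun y : ℝ => D * (y + B * t) / 2) (D / 2) x := by
    simpa using (((hasDerivAt_id x).add_const (B*t)).const_mul D).div_const 2
  have hx := key_stmt13 (D:ℂ) (A:ℂ) (1 / (2 * (lam : ℂ) * (k : ℂ))) c1 c2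
    (fun y : ℝ => D * (y + B * t) / 2) (D/2) x hwx hden
  have hfx : (fun y => μ y t) = (fun y : ℝ => (1 / (2 * (lam : ℂ) * (k : ℂ))) * ((A:ℂ) * I + (D:ℂ) *
        (c1 * Complex.exp (((D * (y + B * t) / 2 : ℝ) : ℂ))
          - c2 * Complex.exp (-((D * (y + B * t) / 2 : ℝ) : ℂ))) /
        (c1 * Complex.exp (((D * (y + B * t) / 2 : ℝ) : ℂ))
          + c2 * Complex.exp (-((D * (y + B * t) / 2 : ℝ) : ℂ))))) :=
    funext fun y => hμ y t
  have hpdx : pdx μ x t = (1 / (2 * (lam : ℂ) * (k : ℂ))) * (D:ℂ) * (4 * ((D/2 : ℝ):ℂ) * c1 * c2) /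
      (c1 * Complex.exp (((D * (x + B * t) / 2 : ℝ) : ℂ))
        + c2 * Complex.exp (-((D * (x + B * t) / 2 : ℝ) : ℂ)))^2 := by
    rw [pdx, hfx]; exact hx.deriv
  -- derivative in t
  have hwt : HasDerivAt (fun s : ℝ => D * (x + B * s) / 2) (D * B / 2) t := by
    simpa using ((((hasDerivAt_id t).const_mul B).const_add x).const_mul D).div_const 2
  have ht := key_stmt13 (D:ℂ) (A:ℂ) (1 / (2 * (lam : ℂ) * (k : ℂ))) c1 c2
    (fun s : ℝ => D * (x + B * s) / 2) (D*B/2) t hwt hden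
  have hft : (fun s => μ x s) = (fun s : ℝ => (1 / (2 * (lam : ℂ) * (k : ℂ))) * ((A:ℂ) * I + (D:ℂ) *
        (c1 * Complex.exp (((D * (x + B * s) / 2 : ℝ) : ℂ))
          - c2 * Complex.exp (-((D * (x + B * s) / 2 : ℝ) : ℂ))) /
        (c1 * Complex.exp (((D * (x + B * s) / 2 : ℝ) : ℂ))
          + c2 * Complex.exp (-((D * (x + B * s) / 2 : ℝ) : ℂ))))) :=
    funext fun s => hμ x s
  have hpdt : pdt μ x t = (1 / (2 * (lam : ℂ) * (k : ℂ))) * (D:ℂ) * (4 * ((D*B/2 : ℝ):ℂ) * c1 * c2) /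
      (c1 * Complex.exp (((D * (x + B * t) / 2 : ℝ) : ℂ))
        + c2 * Complex.exp (-((D * (x + B * t) / 2 : ℝ) : ℂ)))^2 := by
    rw [pdt, hft]; exact ht.deriv
  obtain ⟨E, hEdef⟩ : ∃ y, Complex.exp (((D * (x + B * t) / 2 : ℝ) : ℂ)) = y := ⟨_, rfl⟩
  obtain ⟨F, hFdef⟩ : ∃ y, Complex.exp (-((D * (x + B * t) / 2 : ℝ) : ℂ)) = y := ⟨_, rfl⟩
  have hEF : E * F = 1 := by rw [← hEdef, ← hFdef, ← Complex.exp_add]; simp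
  have hhalf : ((D/2 : ℝ) : ℂ) = (D:ℂ)/2 := by push_cast; ring
  have hhalf2 : ((D*B/2 : ℝ) : ℂ) = (D:ℂ)*(B:ℂ)/2 := by push_cast; ring
  rw [hEdef, hFdef, hhalf] at hpdx
  rw [hEdef, hFdef, hhalf2] at hpdt
  rw [hEdef, hFdef] at hden
  have hI : (I:ℂ)^2 = -1 := Complex.I_sq
  constructor
  · have hmu : μ x t = ((A:ℂ)*I*(c1*E+c2*F) + (D:ℂ)*(c1*E-c2*F)) /
        (2*(lam:ℂ)*(k:ℂ)*(c1*E+c2*F)) := by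
      rw [hμ x t, hEdef, hFdef]
      field_simp [hden, hlam, hk]
    have hpdx2 : pdx μ x t = (D:ℂ)^2*c1*c2 / ((lam:ℂ)*(k:ℂ)*(c1*E+c2*F)^2) := by
      rw [hpdx, div_eq_div_iff (pow_ne_zero 2 hden)
        (mul_ne_zero (mul_ne_zero hlam hk) (pow_ne_zero 2 hden))]
      field_simp
      ring
    rw [hpdx2, hmu]
    field_simp [hden, hlam, hk]
    have hne : (lam:ℂ)*(k:ℂ)*(c1*E+c2*F)^2*(2*(lam:ℂ)*(k:ℂ)*(c1*E+c2*F))^2 ≠ 0 :=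
      mul_ne_zero (mul_ne_zero (mul_ne_zero hlam hk) (pow_ne_zero 2 hden))
        (pow_ne_zero 2 (mul_ne_zero (mul_ne_zero (mul_ne_zero two_ne_zero hlam) hk) hden))
    linear_combination (-(A:ℂ)^2*(c1*E+c2*F)^2) * hI +
      ((c1*E+c2*F)^2) * hD2 +
      (-4*(D:ℂ)^2*c1*c2) * hEF
  · rw [hpdx, hpdt]
    ring
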